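/- Let a < b and let f : [a,b] → ℝ be Lipschitz continuous. Then TV_log^1(f) = TV(f), i.e., for Lipschitz functions the log-total-variation with ε = 1 coincides with the total variation. -/

import Mathlib

/-- The set of partition sums `∑ φ |f (t_{i+1}) - f (t_i)|` over all partitions
`a = t_0 < t_1 < ⋯ < t_n = b` (with `n ≥ 1`) of `[a, b]`. -/
def partitionSums (a b : ℝ) (f : ℝ → ℝ) (φ : ℝ → ℝ) : Set ℝ :=
  { s | ∃ (n : ℕ) (t : ℕ → ℝ), 0 < n ∧ t 0 = a ∧ t n = b ∧
      (∀ i < n, t i < t (i + 1)) ∧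
      s = ∑ i ∈ Finset.range n, φ |f (t (i + 1)) - f (t i)| }

/-- Total variation `TV(f)` on `[a,b]`, as an extended real number. -/
noncomputable def eTV (a b : ℝ) (f : ℝ → ℝ) : EReal :=
  sSup ((fun s : ℝ => (s : EReal)) '' partitionSums a b f id)

/-- Log-total-variation `TV_log^ε(f)` on `[a,b]`, as an extended real number. -/
noncomputable def eTVlog (ε a b : ℝ) (f : ℝ → ℝ) : EReal :=
  sSup ((fun s : ℝ => (s : EReal)) '' partitionSums a b f (fun u => Real.log (ε + u)))

lemma log_one_add_le {u : ℝ} (hu : 0 ≤ u) : Real.log (1 + u) ≤ u := by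
  have := Real.log_le_sub_one_of_pos (x := 1 + u) (by linarith)
  linarith

lemma le_log_one_add {u : ℝ} (hu : 0 ≤ u) : u - u ^ 2 ≤ Real.log (1 + u) := by
  have h1 : (0:ℝ) < 1 + u := by linarith
  have h2 := Real.one_sub_inv_le_log_of_pos h1
  have h3 : (1 + u) * (1 + u)⁻¹ = 1 := mul_inv_cancel₀ h1.ne'
  nlinarith [mul_nonneg hu (inv_pos.2 h1).le, sq_nonneg u]

lemma partition_mono {n : ℕ} {t : ℕ → ℝ} (ht : ∀ i < n, t i < t (i + 1)) :
    ∀ i j, i ≤ j → j ≤ n → t i ≤ t j := by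
  intro i j hij hjn
  induction j with
  | zero => interval_cases i; rfl
  | succ k ih =>
    rcases Nat.eq_or_lt_of_le hij with h | h
    · exact h ▸ le_refl _
    · exact le_trans (ih (Nat.lt_succ_iff.mp h) (le_trans (Nat.le_succ k) hjn))
        (le_of_lt (ht k (lt_of_lt_of_le (Nat.lt_succ_self k) hjn)))

lemma refine_step {m : ℕ} (hm : 0 < m) (t : ℕ → ℝ) (j : ℕ) :
    (fun j => t (j / m) + ((j % m : ℕ) : ℝ) * ((t (j / m + 1) - t (j / m)) / m)) (j + 1)
      - (fun j => t (j / m) + ((j % m : ℕ) : ℝ) * ((t (j / m + 1) - t (j / m)) / m)) j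
      = (t (j / m + 1) - t (j / m)) / m := by
  have hmR : (m : ℝ) ≠ 0 := Nat.cast_ne_zero.mpr hm.ne'
  have hrm : j % m < m := Nat.mod_lt _ hm
  have hj : j = m * (j / m) + j % m := (Nat.div_add_mod j m).symm
  simp only []
  rcases Nat.lt_or_ge (j % m + 1) m with hc | hc
  · have hd : (j + 1) / m = j / m := by
      conv_lhs => rw [hj, Nat.add_assoc]
      rw [Nat.mul_add_div hm, Nat.div_eq_of_lt hc, Nat.add_zero]
    have hmod : (j + 1) % m = j % m + 1 := by
      conv_lhs => rw [hj, Nat.add_assoc]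
      rw [Nat.mul_add_mod, Nat.mod_eq_of_lt hc]
    rw [hd, hmod, Nat.cast_add, Nat.cast_one]
    field_simp
    ring
  · have hc' : j % m + 1 = m := le_antisymm hrm hc
    have hj1 : j + 1 = m * (j / m + 1) := by
      conv_lhs => rw [hj, Nat.add_assoc, hc']
      rw [Nat.mul_succ]
    have hd : (j + 1) / m = j / m + 1 := by rw [hj1, Nat.mul_div_cancel_left _ hm]
    have hmod : (j + 1) % m = 0 := by rw [hj1, Nat.mul_mod_right]
    have hrR : ((j % m : ℕ) : ℝ) = (m : ℝ) - 1 := by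
      have : ((j % m : ℕ) : ℝ) + 1 = m := by exact_mod_cast congrArg (Nat.cast : ℕ → ℝ) hc'
      linarith
    rw [hd, hmod, hrR]
    push_cast
    field_simp
    ring

lemma refine_block {m : ℕ} (hm : 0 < m) (t : ℕ → ℝ) (i : ℕ) :
    (fun j => t (j / m) + ((j % m : ℕ) : ℝ) * ((t (j / m + 1) - t (j / m)) / m)) (i * m) = t i := by
  have h1 : i * m / m = i := Nat.mul_div_cancel i hm
  have h2 : i * m % m = 0 := Nat.mul_mod_left i m
  simp [h1, h2]

lemma sum_range_mul_blocks {M : Type*} [AddCommMonoid M] (g : ℕ → M) (n m : ℕ) :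
    ∑ j ∈ Finset.range (n * m), g j
      = ∑ i ∈ Finset.range n, ∑ r ∈ Finset.range m, g (i * m + r) := by
  induction n with
  | zero => simp
  | succ k ih =>
    rw [Nat.succ_mul, Finset.sum_range_add, ih, Finset.sum_range_succ]

lemma refine_exists (a b : ℝ) (f : ℝ → ℝ) (K : NNReal)
    (hf : LipschitzOnWith K f (Set.Icc a b))
    {n : ℕ} {t : ℕ → ℝ} (hn : 0 < n) (h0 : t 0 = a) (hnb : t n = b)
    (ht : ∀ i < n, t i < t (i + 1)) (m : ℕ) (hm : 0 < m) :
    ∃ s ∈ partitionSums a b f (fun u => Real.log (1 + u)),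
      (∑ i ∈ Finset.range n, |f (t (i + 1)) - f (t i)|)
        - (n * m : ℝ) * (((K : ℝ) * (b - a)) / m) ^ 2 ≤ s := by
  obtain ⟨t', ht'def⟩ : ∃ t' : ℕ → ℝ,
      t' = fun j => t (j / m) + ((j % m : ℕ) : ℝ) * ((t (j / m + 1) - t (j / m)) / m) := ⟨_, rfl⟩
  have hstep : ∀ j, t' (j + 1) - t' j = (t (j / m + 1) - t (j / m)) / m := by
    intro j; rw [ht'def]; exact refine_step hm t j
  have hblock : ∀ i, t' (i * m) = t i := by
    intro i; rw [ht'def]; exact refine_block hm t i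
  have htmono := partition_mono ht
  have hΔle : ∀ i < n, t (i + 1) - t i ≤ b - a := by
    intro i hi
    have h1 : a ≤ t i := h0 ▸ htmono 0 i (Nat.zero_le _) (le_of_lt hi)
    have h2 : t (i + 1) ≤ b := hnb ▸ htmono (i + 1) n (Nat.succ_le_of_lt hi) le_rfl
    linarith
  have ht'pos : ∀ j < n * m, t' j < t' (j + 1) := by
    intro j hj
    have hin : j / m < n := (Nat.div_lt_iff_lt_mul hm).mpr hj
    have h1 := ht _ hin
    have h2 : 0 < (t (j / m + 1) - t (j / m)) / m :=
      div_pos (by linarith) (Nat.cast_pos.mpr hm)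
    have h3 := hstep j
    linarith
  have ht'0 : t' 0 = a := by
    have h := hblock 0; rw [Nat.zero_mul] at h; rw [h, h0]
  have ht'n : t' (n * m) = b := by rw [hblock n, hnb]
  have ht'mono := partition_mono ht'pos
  have hmemI : ∀ j ≤ n * m, t' j ∈ Set.Icc a b := fun j hj =>
    ⟨ht'0 ▸ ht'mono 0 j (Nat.zero_le _) hj, ht'n ▸ ht'mono j (n * m) hj le_rfl⟩
  obtain ⟨u, hudef⟩ : ∃ u : ℕ → ℝ, u = fun j => |f (t' (j + 1)) - f (t' j)| := ⟨_, rfl⟩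
  obtain ⟨δ, hδdef⟩ : ∃ δ : ℝ, δ = (K : ℝ) * (b - a) / m := ⟨_, rfl⟩
  have hu0 : ∀ j, 0 ≤ u j := fun j => hudef ▸ abs_nonneg _
  have huδ : ∀ j < n * m, u j ≤ δ := by
    intro j hj
    have hx := hmemI j (le_of_lt hj)
    have hy := hmemI (j + 1) (Nat.succ_le_of_lt hj)
    have hd := hf.dist_le_mul _ hy _ hx
    rw [Real.dist_eq, Real.dist_eq] at hd
    have hin : j / m < n := (Nat.div_lt_iff_lt_mul hm).mpr hj
    have h1 := hΔle _ hin
    have h2 := ht _ hin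
    have hms := hstep j
    have hmpos : (0:ℝ) < m := Nat.cast_pos.mpr hm
    have habs : |t' (j + 1) - t' j| ≤ (b - a) / m := by
      rw [hms, abs_of_pos (div_pos (by linarith) hmpos)]
      gcongr
    have : u j ≤ (K : ℝ) * ((b - a) / m) := by
      rw [hudef]
      exact le_trans hd (mul_le_mul_of_nonneg_left habs K.coe_nonneg)
    rw [hδdef]
    calc u j ≤ (K : ℝ) * ((b - a) / m) := this
      _ = (K : ℝ) * (b - a) / m := by ring
  have hblocksum : ∀ i < n,
      |f (t (i + 1)) - f (t i)| ≤ ∑ r ∈ Finset.range m, u (i * m + r) := by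
    intro i hi
    have htel := Finset.sum_range_sub (fun r => f (t' (i * m + r))) m
    simp only [Nat.add_zero] at htel
    have h1 : t' (i * m + m) = t (i + 1) := by
      have h := hblock (i + 1); rwa [Nat.succ_mul] at h
    have h2 : t' (i * m) = t i := hblock i
    calc |f (t (i + 1)) - f (t i)|
        = |∑ r ∈ Finset.range m, (f (t' (i * m + (r + 1))) - f (t' (i * m + r)))| := by
          rw [htel, h1, h2]
      _ ≤ ∑ r ∈ Finset.range m, |f (t' (i * m + (r + 1))) - f (t' (i * m + r))| :=
          Finset.abs_sum_le_sum_abs _ _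
      _ = ∑ r ∈ Finset.range m, u (i * m + r) := by
          refine Finset.sum_congr rfl fun r _ => ?_
          simp only [hudef, Nat.add_assoc]
  have hsumu : (∑ i ∈ Finset.range n, |f (t (i + 1)) - f (t i)|)
      ≤ ∑ j ∈ Finset.range (n * m), u j := by
    rw [sum_range_mul_blocks]
    exact Finset.sum_le_sum fun i hi => hblocksum i (Finset.mem_range.mp hi)
  have hsumsq : ∑ j ∈ Finset.range (n * m), u j ^ 2 ≤ (n * m : ℝ) * δ ^ 2 := by
    have h := Finset.sum_le_card_nsmul (Finset.range (n * m)) (fun j => u j ^ 2) (δ ^ 2)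
      (fun j hj => pow_le_pow_left₀ (hu0 j) (huδ j (Finset.mem_range.mp hj)) 2)
    rw [Finset.card_range, nsmul_eq_mul] at h
    push_cast at h ⊢
    linarith
  refine ⟨∑ j ∈ Finset.range (n * m), Real.log (1 + u j),
    ⟨n * m, t', Nat.mul_pos hn hm, ht'0, ht'n, ht'pos, ?_⟩, ?_⟩
  · refine Finset.sum_congr rfl fun j _ => ?_
    simp only [hudef]
  · have hlog : ∑ j ∈ Finset.range (n * m), (u j - u j ^ 2)
        ≤ ∑ j ∈ Finset.range (n * m), Real.log (1 + u j) :=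
      Finset.sum_le_sum fun j _ => le_log_one_add (hu0 j)
    rw [Finset.sum_sub_distrib] at hlog
    have hδeq : (n * m : ℝ) * (((K : ℝ) * (b - a)) / m) ^ 2 = (n * m : ℝ) * δ ^ 2 := by
      rw [hδdef]
    linarith

/-- if `f : [a,b] → ℝ` is Lipschitz continuous, then the
log-total-variation with `ε = 1` coincides with the total variation. -/
theorem tvlog_eq_tv_of_lipschitz (a b : ℝ) (hab : a < b) (f : ℝ → ℝ)
    (K : NNReal) (hf : LipschitzOnWith K f (Set.Icc a b)) :
    eTVlog 1 a b f = eTV a b f := by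
  rw [eTVlog, eTV]
  apply le_antisymm
  · apply sSup_le
    rintro x ⟨s, ⟨n, t, hn, h0, hb, ht, rfl⟩, rfl⟩
    have hle : ∑ i ∈ Finset.range n, Real.log (1 + |f (t (i + 1)) - f (t i)|)
        ≤ ∑ i ∈ Finset.range n, |f (t (i + 1)) - f (t i)| :=
      Finset.sum_le_sum fun i _ => log_one_add_le (abs_nonneg _)
    refine le_trans (EReal.coe_le_coe_iff.mpr hle)
      (le_sSup ⟨_, ⟨n, t, hn, h0, hb, ht, rfl⟩, rfl⟩)
  · apply sSup_le
    rintro x ⟨S, ⟨n, t, hn, h0, hb, ht, rfl⟩, rfl⟩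
    simp only [id_eq]
    refine EReal.ge_of_forall_gt_iff_ge.mp ?_
    intro z hz
    have hzS : z < ∑ i ∈ Finset.range n, |f (t (i + 1)) - f (t i)| := by
      exact_mod_cast hz
    obtain ⟨d, hdz, hd⟩ : ∃ d : ℝ,
        d = (∑ i ∈ Finset.range n, |f (t (i + 1)) - f (t i)|) - z ∧ 0 < d :=
      ⟨_, rfl, by linarith⟩
    obtain ⟨m, hm⟩ := exists_nat_gt
      (max 1 ((n : ℝ) * ((K : ℝ) * (b - a)) ^ 2 / d))
    have hm1 : (1 : ℝ) < m := lt_of_le_of_lt (le_max_left _ _) hm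
    have hmpos : 0 < m := by exact_mod_cast lt_trans zero_lt_one hm1
    have hmRpos : (0 : ℝ) < m := by exact_mod_cast hmpos
    have hm2 : (n : ℝ) * ((K : ℝ) * (b - a)) ^ 2 / d < m :=
      lt_of_le_of_lt (le_max_right _ _) hm
    have hbound : (n * m : ℝ) * (((K : ℝ) * (b - a)) / m) ^ 2 < d := by
      have heq : (n * m : ℝ) * (((K : ℝ) * (b - a)) / m) ^ 2
          = (n : ℝ) * ((K : ℝ) * (b - a)) ^ 2 / m := by
        field_simp
      rw [heq, div_lt_iff₀ hmRpos]
      rw [div_lt_iff₀ hd] at hm2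
      linarith
    obtain ⟨s, hsmem, hs⟩ := refine_exists a b f K hf hn h0 hb ht m hmpos
    have hzs : z ≤ s := by linarith
    exact le_trans (EReal.coe_le_coe_iff.mpr hzs) (le_sSup ⟨s, hsmem, rfl⟩)
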